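/- Let 2 ≤ k ≤ n and m > 0. Then there exists a constant C > 0, depending only on n, k and m, such that for every λ = (λ_1, …, λ_n) ∈ Γ_k with λ_1 ≥ … ≥ λ_n and σ_k(λ) ≥ m, one has σ_{k−1}(λ) ≥ C·λ_1^{1/(k−1)}. -/

import Mathlib

open Multiset

namespace NS

lemma esymm_zero (s : Multiset ℝ) : s.esymm 0 = 1 := by
  simp [Multiset.esymm]

lemma esymm_cons (a : ℝ) (s : Multiset ℝ) (j : ℕ) :
    (a ::ₘ s).esymm (j+1) = s.esymm (j+1) + a * s.esymm j := by
  rw [Multiset.esymm, powersetCard_cons, Multiset.map_add, Multiset.sum_add, map_map]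
  congr 1
  rw [Multiset.esymm, ← Multiset.sum_map_mul_left]
  congr 1
  apply Multiset.map_congr rfl
  intro t _
  simp [Function.comp]

lemma esymm_of_card_lt {s : Multiset ℝ} {j : ℕ} (h : card s < j) : s.esymm j = 0 := by
  rw [Multiset.esymm, powersetCard_eq_empty _ h]; simp

lemma esymm_nonneg {s : Multiset ℝ} (hs : ∀ x ∈ s, 0 ≤ x) (j : ℕ) : 0 ≤ s.esymm j := by
  rw [Multiset.esymm]
  apply Multiset.sum_nonneg
  intro x hx
  obtain ⟨t, ht, rfl⟩ := Multiset.mem_map.mp hx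
  have := (mem_powersetCard.mp ht).1
  exact Multiset.prod_nonneg (fun y hy => hs y (Multiset.mem_of_le this hy))

lemma esymm_pos {s : Multiset ℝ} (hs : ∀ x ∈ s, 0 < x) {j : ℕ} (hj : j ≤ card s) :
    0 < s.esymm j := by
  induction s using Multiset.induction generalizing j with
  | empty => simp at hj; subst hj; simp [esymm_zero]
  | cons a s ih =>
    rcases j with _ | j
    · simp [esymm_zero]
    · rw [esymm_cons]
      have hsj : j ≤ card s := by simpa using hj
      have h1 : 0 < a * s.esymm j :=
        mul_pos (hs a (mem_cons_self a s)) (ih (fun x hx => hs x (mem_cons_of_mem hx)) hsj)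
      have h2 : 0 ≤ s.esymm (j+1) := esymm_nonneg (fun x hx => (hs x (mem_cons_of_mem hx)).le) _
      linarith

end NS

namespace NS
open Multiset

lemma esymm_one' (s : Multiset ℝ) : s.esymm 1 = s.sum := by
  rw [Multiset.esymm, powersetCard_one, map_map]
  simp [Function.comp]

lemma sq_sum_eq (s : Multiset ℝ) : s.sum^2 = (s.map (·^2)).sum + 2 * s.esymm 2 := by
  induction s using Multiset.induction with
  | empty => simp [Multiset.esymm, Multiset.powersetCard_eq_empty 2 (show card (0 : Multiset ℝ) < 2 by simp)]
  | cons a s ih =>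
    rw [Multiset.sum_cons, Multiset.map_cons, Multiset.sum_cons, esymm_cons, esymm_one']
    ring_nf
    ring_nf at ih
    linarith

lemma two_mul_sum_le (a : ℝ) (s : Multiset ℝ) :
    2 * a * s.sum ≤ (card s : ℝ) * a^2 + (s.map (·^2)).sum := by
  induction s using Multiset.induction with
  | empty => simp
  | cons x s ih =>
    rw [Multiset.sum_cons, Multiset.map_cons, Multiset.sum_cons, Multiset.card_cons]
    push_cast
    nlinarith [sq_nonneg (a - x)]

lemma sos (s : Multiset ℝ) : 2 * s.esymm 2 ≤ ((card s : ℝ) - 1) * (s.map (·^2)).sum := by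
  induction s using Multiset.induction with
  | empty => simp [Multiset.esymm, Multiset.powersetCard_eq_empty 2 (show card (0 : Multiset ℝ) < 2 by simp)]
  | cons a s ih =>
    rw [esymm_cons, esymm_one', Multiset.map_cons, Multiset.sum_cons, Multiset.card_cons]
    push_cast
    have := two_mul_sum_le a s
    have hQ : 0 ≤ (s.map (·^2)).sum := Multiset.sum_nonneg (by
      intro x hx; obtain ⟨y, _, rfl⟩ := Multiset.mem_map.mp hx; positivity)
    nlinarith

/-- Newton's inequality, base case `j = 1` (arbitrary card). -/
lemma NW1 (s : Multiset ℝ) :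
    s.esymm 0 * s.esymm 2 * ((card s).choose 1 : ℝ)^2 ≤
      s.esymm 1 ^ 2 * ((card s).choose 0 : ℝ) * ((card s).choose 2 : ℝ) := by
  rw [esymm_zero, esymm_one']
  have h2 : ((card s).choose 2 : ℝ) = (card s : ℝ) * ((card s : ℝ) - 1) / 2 :=
    Nat.cast_choose_two ℝ (card s)
  have h1 : ((card s).choose 1 : ℝ) = (card s : ℝ) := by simp
  have h0 : ((card s).choose 0 : ℝ) = 1 := by simp
  rw [h0, h1, h2, sq_sum_eq]
  have hsos := sos s
  have hQ : 0 ≤ (s.map (·^2)).sum := Multiset.sum_nonneg (by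
    intro x hx; obtain ⟨y, _, rfl⟩ := Multiset.mem_map.mp hx; positivity)
  have hN : (0:ℝ) ≤ (card s : ℝ) := by positivity
  nlinarith [mul_le_mul_of_nonneg_left hsos hN]

end NS

namespace NS
open Multiset Polynomial

lemma esymm_card (s : Multiset ℝ) : s.esymm (card s) = s.prod := by
  induction s using Multiset.induction with
  | empty => simp [Multiset.esymm]
  | cons a s ih =>
    rw [Multiset.card_cons, esymm_cons, esymm_of_card_lt (by omega), ih, Multiset.prod_cons]
    ring

lemma exists_derivative_multiset (s : Multiset ℝ) (hN : 1 ≤ card s) :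
    ∃ t : Multiset ℝ, card t = card s - 1 ∧
      ∀ l : ℕ, (card s : ℝ) * t.esymm l = ((card s - l : ℕ) : ℝ) * s.esymm l := by
  set N := card s with hNdef
  set p : Polynomial ℝ := ((s.map fun a => -a).map fun a => X - C a).prod with hp
  have hmap : (s.map fun a => -a).map (fun a => X - C a)
      = s.map fun a => X + C a := by
    rw [Multiset.map_map]; apply Multiset.map_congr rfl; intro x _; simp [sub_neg_eq_add]
  have hcoeff : ∀ k ≤ N, p.coeff k = s.esymm (N - k) := by
    intro k hk
    rw [hp, hmap]
    exact Multiset.prod_X_add_C_coeff s hk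
  have hmonic : p.Monic := by
    rw [hp, hmap]
    exact monic_multiset_prod_of_monic s (fun a => X + C a) (fun a _ => monic_X_add_C a)
  have hpdeg : p.natDegree = N := by
    rw [hp, hmap, natDegree_multiset_prod_of_monic (Multiset.map (fun a => X + C a) s) (by
      intro f hf
      obtain ⟨a, _, rfl⟩ := Multiset.mem_map.mp hf
      exact monic_X_add_C a), Multiset.map_map]
    have : (Multiset.map (Polynomial.natDegree ∘ fun a => X + C a) s)
        = Multiset.map (fun _ => 1) s :=
      Multiset.map_congr rfl (fun x _ => by simp [natDegree_X_add_C])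
    rw [this, Multiset.map_const']
    simp [hNdef]
  have hproots : p.roots = s.map (fun a => -a) := by
    rw [hp]; exact roots_multiset_prod_X_sub_C _
  set q := derivative p with hq
  have hq1 : q.coeff (N - 1) = (N : ℝ) := by
    rw [hq, coeff_derivative, show N - 1 + 1 = N from by omega,
      hcoeff N le_rfl, Nat.sub_self, esymm_zero]
    rw [one_mul]
    norm_cast
    omega
  have hqne : q ≠ 0 := by
    intro h
    rw [h, coeff_zero] at hq1
    have : (N:ℝ) ≠ 0 := by positivity
    exact this hq1.symm
  have hqdeg : q.natDegree = N - 1 := by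
    refine le_antisymm ?_ (le_natDegree_of_ne_zero (by rw [hq1]; positivity))
    calc q.natDegree ≤ p.natDegree - 1 := natDegree_derivative_le p
    _ = N - 1 := by rw [hpdeg]
  have hqroots : Multiset.card q.roots = N - 1 := by
    refine le_antisymm (hqdeg ▸ card_roots' q) ?_
    have := card_roots_le_derivative p
    rw [hproots] at this
    simp only [Multiset.card_map] at this
    rw [← hq] at this
    omega
  have hfact : C q.leadingCoeff * (q.roots.map fun a => X - C a).prod = q :=
    C_leadingCoeff_mul_prod_multiset_X_sub_C (by rw [hqroots, hqdeg])
  have hlead : q.leadingCoeff = (N : ℝ) := by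
    rw [Polynomial.leadingCoeff, hqdeg, hq1]
  refine ⟨q.roots.map (fun x => -x), by simp [hqroots], ?_⟩
  intro l
  rcases le_or_gt l (N - 1) with hl | hl
  · -- main case
    have hmap2 : ((q.roots.map (fun x => -x)).map (fun a => X + C a)).prod
        = (q.roots.map fun a => X - C a).prod := by
      rw [Multiset.map_map]
      congr 1
      apply Multiset.map_congr rfl; intro x _; simp [sub_eq_add_neg]
    have hcardt : card (q.roots.map (fun x => -x)) = N - 1 := by simp [hqroots]
    have h1 : q.coeff (N - 1 - l) = (N : ℝ) * (q.roots.map (fun x => -x)).esymm l := by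
      conv_lhs => rw [← hfact]
      rw [coeff_C_mul, hlead]
      congr 1
      rw [← hmap2]
      have := Multiset.prod_X_add_C_coeff (q.roots.map (fun x => -x))
        (show N - 1 - l ≤ card (q.roots.map (fun x => -x)) by omega)
      rw [this, hcardt, show N - 1 - (N - 1 - l) = l from by omega]
    have h2 : q.coeff (N - 1 - l) = ((N - l : ℕ) : ℝ) * s.esymm l := by
      rw [hq, coeff_derivative, show N - 1 - l + 1 = N - l from by omega,
        hcoeff (N - l) (by omega), show N - (N - l) = l from by omega]
      rw [show N - l = N - 1 - l + 1 from by omega]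
      push_cast
      ring
    rw [← h1, h2]
  · -- l > N - 1
    rw [esymm_of_card_lt (by simp [hqroots]; omega)]
    rcases le_or_gt l N with h | h
    · have : l = N := by omega
      subst this
      simp
    · rw [show N - l = 0 from by omega]
      simp

end NS

namespace NS
open Multiset Polynomial

lemma esymm_inv : ∀ (s : Multiset ℝ), (∀ x ∈ s, x ≠ 0) → ∀ l, l ≤ card s →
    (s.map (·⁻¹)).esymm l * s.prod = s.esymm (card s - l) := by
  intro s
  induction s using Multiset.induction with
  | empty =>
    intro _ l hl
    simp at hl
    subst hl
    simp [esymm_zero]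
  | cons a s ih =>
    intro h l hl
    have ha : a ≠ 0 := h a (mem_cons_self a s)
    have hs : ∀ x ∈ s, x ≠ 0 := fun x hx => h x (mem_cons_of_mem hx)
    rcases l with _ | l'
    · rw [esymm_zero, one_mul, Nat.sub_zero, esymm_card]
    · rw [Multiset.map_cons, esymm_cons, Multiset.prod_cons]
      rcases Nat.lt_or_ge l' (card s) with hl' | hl'
      · have e1 := ih hs (l'+1) hl'
        have e2 := ih hs l' (le_of_lt hl')
        rw [Multiset.card_cons,
          show card s + 1 - (l'+1) = (card s - (l'+1)) + 1 from by omega, esymm_cons,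
          show (card s - (l'+1)) + 1 = card s - l' from by omega]
        have expand : ((Multiset.map (fun x => x⁻¹) s).esymm (l'+1)
            + a⁻¹ * (Multiset.map (fun x => x⁻¹) s).esymm l') * (a * s.prod)
            = a * ((Multiset.map (fun x => x⁻¹) s).esymm (l'+1) * s.prod)
              + (a⁻¹ * a) * ((Multiset.map (fun x => x⁻¹) s).esymm l' * s.prod) := by ring
        rw [expand, inv_mul_cancel₀ ha, one_mul, e1, e2]
        ring
      · have hle : l' = card s := by
          rw [Multiset.card_cons] at hl; omega
        subst hle
        have e0 := ih hs (card s) le_rfl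
        rw [Nat.sub_self, esymm_zero] at e0
        rw [esymm_of_card_lt (by simp), Multiset.card_cons, Nat.sub_self, esymm_zero]
        have expand : ((0:ℝ) + a⁻¹ * (Multiset.map (fun x => x⁻¹) s).esymm (card s)) * (a * s.prod)
            = (a⁻¹ * a) * ((Multiset.map (fun x => x⁻¹) s).esymm (card s) * s.prod) := by ring
        rw [expand, inv_mul_cancel₀ ha, one_mul, e0]

lemma choose_id (N l : ℕ) (h1 : 1 ≤ N) : N.choose l * (N - l) = N * (N-1).choose l := by
  have h2 := Nat.choose_succ_right_eq N l
  have h3 := Nat.add_one_mul_choose_eq (N-1) l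
  have h3' : N * (N-1).choose l = N.choose (l+1) * (l+1) := by
    rw [show N.choose (l+1) = ((N-1)+1).choose (l+1) from by rw [show (N-1)+1 = N from by omega]]
    rw [show N = (N-1)+1 from by omega]
    simpa [Nat.succ_eq_add_one] using h3
  calc N.choose l * (N - l) = N.choose (l+1) * (l+1) := h2.symm
    _ = N * (N-1).choose l := h3'.symm

/-- Newton's inequality for arbitrary real multisets (normalized by binomials). -/
theorem newton : ∀ (N : ℕ) (s : Multiset ℝ), card s = N → ∀ j : ℕ, 1 ≤ j →
    s.esymm (j-1) * s.esymm (j+1) * ((card s).choose j : ℝ)^2 ≤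
      s.esymm j ^ 2 * ((card s).choose (j-1) : ℝ) * ((card s).choose (j+1) : ℝ) := by
  intro N
  induction N using Nat.strong_induction_on with
  | _ N ih =>
  intro s hcard j hj
  subst hcard
  rcases eq_or_lt_of_le hj with hj1 | hj2
  · -- j = 1 : base case
    rw [← hj1]
    simpa using NW1 s
  -- now j ≥ 2
  rcases lt_trichotomy (j+1) (card s) with h | h | h
  · -- derivative step
    obtain ⟨t, ht1, ht2⟩ := exists_derivative_multiset s (by omega)
    have IH := ih (card s - 1) (by omega) t ht1 j hj
    rw [ht1] at IH
    set N := card s with hN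
    have hcast : ∀ l ≤ N, ((N:ℝ) - l) * s.esymm l = (N:ℝ) * t.esymm l := by
      intro l hl
      rw [ht2 l, Nat.cast_sub hl]
    have hchoose : ∀ l ≤ N, ((N:ℝ) - l) * (N.choose l : ℝ) = (N:ℝ) * ((N-1).choose l : ℝ) := by
      intro l hl
      have := choose_id N l (by omega)
      have := congrArg (fun x : ℕ => (x : ℝ)) this
      push_cast [Nat.cast_sub hl] at this
      linarith [this]
    have kA := hcast (j-1) (by omega)
    have kB := hcast j (by omega)
    have kD := hcast (j+1) (by omega)
    have cA := hchoose (j-1) (by omega)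
    have cB := hchoose j (by omega)
    have cD := hchoose (j+1) (by omega)
    have hx : (0:ℝ) < (N:ℝ) - ((j-1 : ℕ):ℝ) := by
      have : ((j-1:ℕ):ℝ) < (N:ℝ) := by exact_mod_cast (show j - 1 < N by omega)
      linarith
    have hy : (0:ℝ) < (N:ℝ) - (j:ℝ) := by
      have : ((j:ℕ):ℝ) < (N:ℝ) := by exact_mod_cast (show j < N by omega)
      linarith
    have hz : (0:ℝ) < (N:ℝ) - ((j+1 : ℕ):ℝ) := by
      have : ((j+1:ℕ):ℝ) < (N:ℝ) := by exact_mod_cast h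
      linarith
    set x := (N:ℝ) - ((j-1 : ℕ):ℝ)
    set y := (N:ℝ) - ((j:ℕ):ℝ)
    set z := (N:ℝ) - ((j+1 : ℕ):ℝ)
    have H1 : (x * s.esymm (j-1)) * (z * s.esymm (j+1)) * ((y * (N.choose j : ℝ)))^2 ≤
        ((y * s.esymm j))^2 * ((x * (N.choose (j-1) : ℝ)) * (z * (N.choose (j+1) : ℝ))) := by
      rw [kA, kB, kD, cA, cB, cD]
      calc ((N:ℝ) * t.esymm (j-1)) * ((N:ℝ) * t.esymm (j+1)) * ((N:ℝ) * ((N-1).choose j : ℝ))^2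
          = (N:ℝ)^4 * (t.esymm (j-1) * t.esymm (j+1) * ((N-1).choose j : ℝ)^2) := by ring
        _ ≤ (N:ℝ)^4 * (t.esymm j ^2 * ((N-1).choose (j-1) : ℝ) * ((N-1).choose (j+1) : ℝ)) := by
            apply mul_le_mul_of_nonneg_left IH (by positivity)
        _ = ((N:ℝ) * t.esymm j)^2 * (((N:ℝ) * ((N-1).choose (j-1):ℝ)) * ((N:ℝ) * ((N-1).choose (j+1):ℝ))) := by ring
    have H2 : (x*z*y^2) * (s.esymm (j-1) * s.esymm (j+1) * ((N.choose j : ℝ))^2) ≤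
        (x*z*y^2) * (s.esymm j^2 * ((N.choose (j-1)):ℝ) * ((N.choose (j+1)):ℝ)) := by
      calc (x*z*y^2) * (s.esymm (j-1) * s.esymm (j+1) * ((N.choose j : ℝ))^2)
          = (x * s.esymm (j-1)) * (z * s.esymm (j+1)) * ((y * (N.choose j : ℝ)))^2 := by ring
        _ ≤ ((y * s.esymm j))^2 * ((x * (N.choose (j-1) : ℝ)) * (z * (N.choose (j+1) : ℝ))) := H1
        _ = (x*z*y^2) * (s.esymm j^2 * ((N.choose (j-1)):ℝ) * ((N.choose (j+1)):ℝ)) := by ring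
    exact le_of_mul_le_mul_left H2 (by positivity)
  · -- top case j + 1 = card s
    by_cases h0 : (0:ℝ) ∈ s
    · have hz : s.esymm (j+1) = 0 := by
        rw [h, esymm_card]
        exact Multiset.prod_eq_zero h0
      rw [hz, show s.esymm (j-1) * 0 * (((card s).choose j : ℕ):ℝ)^2 = 0 from by ring]
      positivity
    · have hne : ∀ x ∈ s, x ≠ 0 := fun x hx hx0 => h0 (hx0 ▸ hx)
      have hprod : s.prod ≠ 0 := Multiset.prod_ne_zero h0
      set ρ := s.map (fun x => x⁻¹) with hρ
      have h1 := NW1 ρ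
      rw [hρ, Multiset.card_map, ← hρ] at h1
      rw [esymm_zero, one_mul, Nat.choose_zero_right, Nat.cast_one, mul_one] at h1
      have hinv2 := esymm_inv s hne 2 (by omega)
      have hinv1 := esymm_inv s hne 1 (by omega)
      rw [show card s - 2 = j - 1 from by omega] at hinv2
      rw [show card s - 1 = j from by omega] at hinv1
      have hprodE : s.esymm (j+1) = s.prod := by rw [h]; exact esymm_card s
      have c1 : (card s).choose j = (card s).choose 1 := by
        rw [show j = card s - 1 from by omega]
        exact Nat.choose_symm (by omega)
      have c2 : (card s).choose (j-1) = (card s).choose 2 := by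
        rw [show j - 1 = card s - 2 from by omega]
        exact Nat.choose_symm (by omega)
      have c3 : (card s).choose (j+1) = 1 := by rw [h]; exact Nat.choose_self _
      rw [hprodE, c1, c2, c3]
      calc s.esymm (j-1) * s.prod * (((card s).choose 1 : ℕ):ℝ)^2
          = (ρ.esymm 2 * (((card s).choose 1 : ℕ):ℝ)^2) * s.prod^2 := by
            rw [← hinv2]; ring
        _ ≤ (ρ.esymm 1^2 * (((card s).choose 2 : ℕ):ℝ)) * s.prod^2 := by
            apply mul_le_mul_of_nonneg_right _ (sq_nonneg s.prod)
            calc ρ.esymm 2 * (((card s).choose 1 : ℕ):ℝ)^2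
                ≤ ρ.esymm 1^2 * (((card s).choose 2 : ℕ):ℝ) := h1
              _ = ρ.esymm 1^2 * (((card s).choose 2 : ℕ):ℝ) := rfl
        _ = (ρ.esymm 1 * s.prod)^2 * (((card s).choose 2 : ℕ):ℝ) * 1 := by ring
        _ = s.esymm j^2 * (((card s).choose 2 : ℕ):ℝ) * 1 := by rw [hinv1]
        _ ≤ s.esymm j^2 * (((card s).choose 2 : ℕ):ℝ) * ((1:ℕ):ℝ) := by norm_num
  · -- j + 1 > card s : esymm (j+1) = 0
    rw [esymm_of_card_lt h]
    have : s.esymm (j-1) * 0 * ((card s).choose j : ℝ)^2 = 0 := by ring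
    rw [this]
    positivity

end NS

namespace NS
open Multiset

lemma choose_logconcave (N k : ℕ) (hk : 2 ≤ k) (hkN : k ≤ N) :
    N.choose k * N.choose (k-2) ≤ N.choose (k-1) * N.choose (k-1) := by
  have h2 : N.choose k * k = N.choose (k-1) * (N - (k-1)) := by
    have := Nat.choose_succ_right_eq N (k-1)
    rw [show k - 1 + 1 = k from by omega] at this
    exact this
  have h3 : N.choose (k-1) * (k-1) = N.choose (k-2) * (N - (k-2)) := by
    have := Nat.choose_succ_right_eq N (k-2)
    rw [show k - 2 + 1 = k - 1 from by omega] at this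
    exact this
  have key : (N.choose k * N.choose (k-2)) * (k * (N - (k-2))) =
      (N.choose (k-1) * N.choose (k-1)) * ((N - (k-1)) * (k-1)) := by
    calc (N.choose k * N.choose (k-2)) * (k * (N - (k-2)))
        = (N.choose k * k) * (N.choose (k-2) * (N - (k-2))) := by ring
      _ = (N.choose (k-1) * (N - (k-1))) * (N.choose (k-1) * (k-1)) := by rw [h2, ← h3]
      _ = (N.choose (k-1) * N.choose (k-1)) * ((N - (k-1)) * (k-1)) := by ring
  have hle : (N - (k-1)) * (k-1) ≤ k * (N - (k-2)) := by
    have h1 : N - (k-1) ≤ N - (k-2) := by omega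
    calc (N - (k-1)) * (k-1) ≤ (N - (k-2)) * k := Nat.mul_le_mul h1 (by omega)
      _ = k * (N - (k-2)) := by ring
  have hpos : 0 < k * (N - (k-2)) := by
    apply Nat.mul_pos (by omega) (by omega)
  have : (N.choose k * N.choose (k-2)) * (k * (N - (k-2))) ≤
      (N.choose (k-1) * N.choose (k-1)) * (k * (N - (k-2))) := by
    rw [key]
    exact Nat.mul_le_mul_left _ hle
  exact Nat.le_of_mul_le_mul_right this hpos

/-- Newton's inequality without binomial normalization, assuming positivity of `e_{k-2}`. -/
lemma newton_raw (s : Multiset ℝ) (k : ℕ) (hk : 2 ≤ k) (h2 : 0 < s.esymm (k-2)) :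
    s.esymm k * s.esymm (k-2) ≤ s.esymm (k-1)^2 := by
  rcases le_or_gt (s.esymm k) 0 with hek | hek
  · have : s.esymm k * s.esymm (k-2) ≤ 0 := mul_nonpos_of_nonpos_of_nonneg hek h2.le
    exact this.trans (sq_nonneg _)
  · set N := card s with hN
    have hkN : k ≤ N := by
      by_contra hc
      rw [esymm_of_card_lt (by omega)] at hek
      exact lt_irrefl _ hek
    have HN := newton N s rfl (k-1) (by omega)
    rw [show k - 1 - 1 = k - 2 from by omega, show k - 1 + 1 = k from by omega, ← hN] at HN
    have hcc : (N.choose (k-2) : ℝ) * (N.choose k : ℝ) ≤ (N.choose (k-1):ℝ) * (N.choose (k-1):ℝ) := by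
      exact_mod_cast (by linarith [choose_logconcave N k hk hkN] : N.choose (k-2) * N.choose k ≤ N.choose (k-1) * N.choose (k-1))
    have hb : (0:ℝ) < (N.choose (k-1):ℝ) := by
      exact_mod_cast Nat.choose_pos (show k - 1 ≤ N by omega)
    have step : s.esymm (k-2) * s.esymm k * ((N.choose (k-1):ℝ))^2 ≤
        s.esymm (k-1)^2 * ((N.choose (k-1):ℝ))^2 := by
      calc s.esymm (k-2) * s.esymm k * ((N.choose (k-1):ℝ))^2
          ≤ s.esymm (k-1)^2 * (N.choose (k-2) : ℝ) * (N.choose k : ℝ) := HN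
        _ = s.esymm (k-1)^2 * ((N.choose (k-2) : ℝ) * (N.choose k : ℝ)) := by ring
        _ ≤ s.esymm (k-1)^2 * ((N.choose (k-1):ℝ) * (N.choose (k-1):ℝ)) :=
            mul_le_mul_of_nonneg_left hcc (sq_nonneg _)
        _ = s.esymm (k-1)^2 * ((N.choose (k-1):ℝ))^2 := by ring
    have := le_of_mul_le_mul_right (by
      calc s.esymm k * s.esymm (k-2) * ((N.choose (k-1):ℝ))^2
          = s.esymm (k-2) * s.esymm k * ((N.choose (k-1):ℝ))^2 := by ring
        _ ≤ s.esymm (k-1)^2 * ((N.choose (k-1):ℝ))^2 := step) (by positivity : (0:ℝ) < ((N.choose (k-1):ℝ))^2)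
    exact this

end NS

namespace NS
open Multiset

/-- Gårding cone condition for a multiset. -/
def Gam (k : ℕ) (s : Multiset ℝ) : Prop := ∀ j, 1 ≤ j → j ≤ k → 0 < s.esymm j

lemma Gam.mono {k k' : ℕ} {s : Multiset ℝ} (h : Gam k s) (hk : k' ≤ k) : Gam k' s :=
  fun j hj1 hj2 => h j hj1 (hj2.trans hk)

/-- Removing a nonpositive entry keeps us in the cone and increases the `esymm`s. -/
lemma Gam_cons_nonpos {k : ℕ} {b : ℝ} {s : Multiset ℝ} (hb0 : b ≤ 0) (hG : Gam k (b ::ₘ s)) :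
    Gam k s ∧ ∀ j ≤ k, (b ::ₘ s).esymm j ≤ s.esymm j := by
  have key : ∀ j ≤ k, (b ::ₘ s).esymm j ≤ s.esymm j ∧ (1 ≤ j → 0 < s.esymm j) := by
    intro j
    induction j with
    | zero => intro _; simp [esymm_zero]
    | succ i ih =>
      intro hik
      have hbe : b * s.esymm i ≤ 0 := by
        rcases Nat.eq_zero_or_pos i with h0 | h0
        · subst h0; rw [esymm_zero]; linarith
        · exact mul_nonpos_of_nonpos_of_nonneg hb0 ((ih (by omega)).2 h0).le
      have hc := esymm_cons b s i
      constructor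
      · linarith
      · intro _
        have := hG (i+1) (by omega) hik
        linarith
  exact ⟨fun j hj1 hj2 => (key j hj2).2 hj1, fun j hj => (key j hj).1⟩

/-- Removing a multiset of nonpositive entries. -/
lemma Gam_sub_nonpos {k : ℕ} : ∀ (t s : Multiset ℝ), (∀ x ∈ t, x ≤ 0) → Gam k (s + t) →
    Gam k s ∧ ∀ j ≤ k, (s + t).esymm j ≤ s.esymm j := by
  intro t
  induction t using Multiset.induction with
  | empty =>
    intro s _ hG
    rw [add_zero] at hG
    exact ⟨hG, fun j _ => by rw [add_zero]⟩
  | cons b t ih =>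
    intro s ht hG
    have hb : b ≤ 0 := ht b (mem_cons_self b t)
    have hswap : b ::ₘ (s + t) = s + (b ::ₘ t) := by
      rw [← Multiset.singleton_add, ← Multiset.singleton_add]
      abel
    have hG' : Gam k (b ::ₘ (s + t)) := by rwa [← hswap] at hG
    obtain ⟨hG1, hle1⟩ := Gam_cons_nonpos hb hG'
    obtain ⟨hG2, hle2⟩ := ih s (fun x hx => ht x (mem_cons_of_mem hx)) hG1
    refine ⟨hG2, fun j hj => ?_⟩
    calc (s + (b ::ₘ t)).esymm j = (b ::ₘ (s + t)).esymm j := by rw [hswap]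
      _ ≤ (s + t).esymm j := hle1 j hj
      _ ≤ s.esymm j := hle2 j hj

lemma esymm_pos_of_pos_count {s : Multiset ℝ} (hs : ∀ x ∈ s, 0 ≤ x) {j : ℕ}
    (hj : j ≤ card (s.filter (fun x => 0 < x))) : 0 < s.esymm j := by
  classical
  induction s using Multiset.induction generalizing j with
  | empty => simp at hj; subst hj; simp [esymm_zero]
  | cons a s ih =>
    have ha : 0 ≤ a := hs a (mem_cons_self a s)
    have hs' : ∀ x ∈ s, 0 ≤ x := fun x hx => hs x (mem_cons_of_mem hx)
    rcases j with _ | i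
    · simp [esymm_zero]
    · rw [esymm_cons]
      have hnn1 : 0 ≤ s.esymm (i+1) := esymm_nonneg hs' _
      rcases lt_or_ge 0 a with hap | haz
      · have hcnt : i ≤ card (s.filter (fun x => 0 < x)) := by
          simp only [Multiset.filter_cons, if_pos hap, Multiset.card_add,
            Multiset.card_singleton] at hj
          omega
        have := ih hs' hcnt
        nlinarith
      · have ha0 : a = 0 := le_antisymm haz ha
        have hcnt : i + 1 ≤ card (s.filter (fun x => 0 < x)) := by
          simp only [Multiset.filter_cons, if_neg (by simp [ha0] : ¬ (0:ℝ) < a),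
            Multiset.card_add] at hj
          simpa using hj
        have := ih hs' hcnt
        subst ha0
        simpa using this

lemma pos_count_of_esymm_pos {s : Multiset ℝ} (hs : ∀ x ∈ s, 0 ≤ x) {j : ℕ}
    (h : 0 < s.esymm j) : j ≤ card (s.filter (fun x => 0 < x)) := by
  classical
  by_contra hc
  push_neg at hc
  -- show esymm j = 0
  suffices hz : s.esymm j = 0 by rw [hz] at h; exact lt_irrefl _ h
  clear h
  induction s using Multiset.induction generalizing j with
  | empty =>
    simp at hc
    rw [esymm_of_card_lt (by simpa using hc)]
  | cons a s ih =>
    have ha : 0 ≤ a := hs a (mem_cons_self a s)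
    have hs' : ∀ x ∈ s, 0 ≤ x := fun x hx => hs x (mem_cons_of_mem hx)
    rcases j with _ | i
    · omega
    · rw [esymm_cons]
      rcases lt_or_ge 0 a with hap | haz
      · simp only [Multiset.filter_cons, if_pos hap, Multiset.card_add,
          Multiset.card_singleton] at hc
        rw [ih hs' (by omega), ih hs' (by omega)]
        ring
      · have ha0 : a = 0 := le_antisymm haz ha
        simp only [Multiset.filter_cons, if_neg (by simp [ha0] : ¬ (0:ℝ) < a),
          Multiset.card_add] at hc
        simp only [Multiset.card_zero, zero_add] at hc
        rw [ih hs' (by omega), ha0]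
        ring

end NS

namespace NS
open Multiset

theorem Gam_erase : ∀ (n : ℕ) (s : Multiset ℝ), card s = n → ∀ (k : ℕ), Gam k s →
    ∀ a ∈ s, Gam (k-1) (s.erase a) := by
  classical
  intro n
  induction n using Nat.strong_induction_on with
  | _ n ihn =>
  intro s hcard k
  induction k with
  | zero => intro _ a _ j hj1 hj0; omega
  | succ k ihk =>
    intro hG a ha
    rcases Nat.eq_zero_or_pos k with hk0 | hk0
    · subst hk0; intro j hj1 hj0; omega
    simp only [Nat.add_sub_cancel]
    intro j hj1 hjk
    rcases lt_or_eq_of_le hjk with hjlt | hjeq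
    · have h1 := ihk (hG.mono (by omega)) a ha
      exact h1 j hj1 (by omega)
    subst hjeq
    rcases le_or_gt a 0 with ha0 | hapos
    · -- a nonpositive: removal lemma
      have hcons : a ::ₘ s.erase a = s := Multiset.cons_erase ha
      have hG' : Gam (j+1) (a ::ₘ s.erase a) := by rwa [hcons]
      exact (Gam_cons_nonpos ha0 hG').1 j hj1 (by omega)
    by_cases hneg : ∃ b ∈ s, b < 0
    · -- the crux case
      obtain ⟨b, hbs, hb0⟩ := hneg
      have hab : a ≠ b := by intro h; rw [h] at hapos; linarith
      set μ := s.erase b with hμ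
      have hconsb : b ::ₘ μ = s := Multiset.cons_erase hbs
      have hGμ : Gam (j+1) μ := by
        refine (Gam_cons_nonpos hb0.le ?_).1
        rwa [hconsb]
      have haμ : a ∈ μ := by
        rw [hμ]
        exact (Multiset.mem_erase_of_ne hab).mpr ha
      set ν := μ.erase a with hν
      have hconsa : a ::ₘ ν = μ := Multiset.cons_erase haμ
      have hn1 : 0 < n := by
        rw [← hcard]
        exact Multiset.card_pos.mpr (by intro h; rw [h] at ha; simp at ha)
      have hcardμ : card μ = n - 1 := by
        rw [hμ, Multiset.card_erase_of_mem hbs, hcard]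
        simp
      have hGν : Gam j ν := by
        have := ihn (n-1) (by omega) μ hcardμ (j+1) hGμ a haμ
        simpa using this
      have hS1 : 0 < ν.esymm j := hGν j hj1 le_rfl
      have hS0 : 0 < ν.esymm (j-1) := by
        rcases Nat.eq_zero_or_pos (j-1) with h0 | h0
        · rw [h0, esymm_zero]; norm_num
        · exact hGν (j-1) h0 (by omega)
      have hNewt : ν.esymm (j+1) * ν.esymm (j-1) ≤ ν.esymm j ^ 2 := by
        have := newton_raw ν (j+1) (by omega) (by
          rw [show j+1-2 = j-1 from by omega]; exact hS0)
        rwa [show j+1-1 = j from by omega, show j+1-2 = j-1 from by omega] at this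
      have hU : 0 < μ.esymm (j+1) := hGμ (j+1) (by omega) (by omega)
      have hT : 0 < s.esymm (j+1) := hG (j+1) (by omega) (by omega)
      have hUdef : μ.esymm (j+1) = ν.esymm (j+1) + a * ν.esymm j := by
        rw [← hconsa, esymm_cons]
      have hTdef : s.esymm (j+1) = μ.esymm (j+1) + b * μ.esymm j := by
        rw [← hconsb, esymm_cons]
      have hμj : μ.esymm j = ν.esymm j + a * ν.esymm (j-1) := by
        have := esymm_cons a ν (j-1)
        rw [show j-1+1 = j from by omega] at this
        rw [← hconsa, this]
      have hsea : s.erase a = b ::ₘ ν := by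
        rw [← hconsb, Multiset.erase_cons_tail _ (by exact fun h => hab h.symm)]
      have hgoal : (s.erase a).esymm j = ν.esymm j + b * ν.esymm (j-1) := by
        have := esymm_cons b ν (j-1)
        rw [show j-1+1 = j from by omega] at this
        rw [hsea, this]
      rw [hgoal]
      have hD : 0 < ν.esymm j + a * ν.esymm (j-1) := by
        have := mul_pos hapos hS0
        linarith
      have h1 : (-b) * (ν.esymm j + a * ν.esymm (j-1)) < μ.esymm (j+1) := by
        have h := hT
        rw [hTdef, hμj] at h
        linarith
      have h2 : μ.esymm (j+1) * ν.esymm (j-1) ≤ ν.esymm j * (ν.esymm j + a * ν.esymm (j-1)) := by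
        rw [hUdef]
        nlinarith [hNewt]
      have h4 := mul_lt_mul_of_pos_right h1 hS0
      have h5 : (-b) * ν.esymm (j-1) * (ν.esymm j + a * ν.esymm (j-1)) <
          ν.esymm j * (ν.esymm j + a * ν.esymm (j-1)) := by nlinarith [h4, h2]
      have h6 : (-b) * ν.esymm (j-1) < ν.esymm j := lt_of_mul_lt_mul_right h5 hD.le
      linarith
    · -- all entries nonnegative
      push_neg at hneg
      have hsnn : ∀ x ∈ s, 0 ≤ x := hneg
      have hcount : j+1 ≤ card (s.filter (fun x => 0 < x)) :=
        pos_count_of_esymm_pos hsnn (hG (j+1) (by omega) le_rfl)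
      have herase_nn : ∀ x ∈ s.erase a, 0 ≤ x := fun x hx =>
        hsnn x (Multiset.mem_of_mem_erase hx)
      apply esymm_pos_of_pos_count herase_nn
      have hcons : a ::ₘ s.erase a = s := Multiset.cons_erase ha
      have hstep : card (s.filter (fun x => 0 < x)) ≤
          card ((s.erase a).filter (fun x => 0 < x)) + 1 := by
        rw [← hcons]
        simp only [Multiset.filter_cons]
        by_cases hpa : (0:ℝ) < a
        · rw [if_pos hpa]; simp
        · rw [if_neg hpa]; simp
      omega

end NS

namespace NS
open Multiset

lemma sum_nonpos {s : Multiset ℝ} (h : ∀ x ∈ s, x ≤ 0) : s.sum ≤ 0 := by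
  induction s using Multiset.induction with
  | empty => simp
  | cons a s ih =>
    rw [Multiset.sum_cons]
    have := h a (mem_cons_self a s)
    have := ih (fun x hx => h x (mem_cons_of_mem hx))
    linarith

lemma strictmono_fin_le {k : ℕ} (f : Fin k → ℕ) (hf : ∀ i j : Fin k, i < j → f i < f j) :
    ∀ j : Fin k, (j : ℕ) ≤ f j := by
  have key : ∀ v, ∀ j : Fin k, (j : ℕ) = v → v ≤ f j := by
    intro v
    induction v with
    | zero => intro j _; omega
    | succ v ih =>
      intro j hj
      have hv : v < k := by omega
      have h1 : f ⟨v, hv⟩ < f j := hf ⟨v, hv⟩ j (by simp [Fin.lt_def]; omega)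
      have h2 := ih ⟨v, hv⟩ rfl
      omega
  exact fun j => key (j : ℕ) j rfl

lemma choose_le_two_pow_n (p k n : ℕ) (hpn : p ≤ n) : p.choose k ≤ 2^n := by
  have h1 : p.choose k ≤ 2^p := by
    rcases le_or_gt k p with h | h
    · calc p.choose k ≤ ∑ m ∈ Finset.range (p+1), p.choose m :=
          Finset.single_le_sum (fun i _ => Nat.zero_le _) (Finset.mem_range.mpr (by omega))
        _ = 2^p := Nat.sum_range_choose p
    · rw [Nat.choose_eq_zero_of_lt h]; positivity
  calc p.choose k ≤ 2^p := h1
    _ ≤ 2^n := Nat.pow_le_pow_right (by norm_num) hpn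

lemma prod_subset_le {n k : ℕ} (hkn : k ≤ n) (lam : Fin n → ℝ)
    (hmono : ∀ i j : Fin n, i ≤ j → lam j ≤ lam i) (B : Finset (Fin n)) (hB : B.card = k)
    (hBpos : ∀ i ∈ B, 0 ≤ lam i) :
    ∏ i ∈ B, lam i ≤ ∏ j : Fin k, lam (Fin.castLE hkn j) := by
  classical
  set e := B.orderIsoOfFin hB with he
  have h1 : ∏ i ∈ B, lam i = ∏ j : Fin k, lam (e j) := by
    rw [← Finset.prod_coe_sort B lam]
    exact (Equiv.prod_comp e.toEquiv (fun i : B => lam i)).symm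
  rw [h1]
  have hle : ∀ j : Fin k, (j : ℕ) ≤ ((e j : Fin n) : ℕ) := by
    apply strictmono_fin_le
    intro i j hij
    have : (e i : Fin n) < (e j : Fin n) := by
      have := e.strictMono hij
      exact_mod_cast this
    exact this
  apply Finset.prod_le_prod
  · intro j _
    exact hBpos _ (e j).2
  · intro j _
    apply hmono
    show Fin.castLE hkn j ≤ (e j : Fin n)
    rw [Fin.le_def]
    exact hle j

end NS


noncomputable def esymm (n m : ℕ) (lam : Fin n → ℝ) : ℝ :=
  ∑ s ∈ (Finset.univ : Finset (Fin n)).powersetCard m, ∏ i ∈ s, lam i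

def GardingCone (n k : ℕ) : Set (Fin n → ℝ) :=
  {lam | ∀ j, 1 ≤ j → j ≤ k → 0 < esymm n j lam}

/-- For `2 ≤ k ≤ n` and `m > 0` there is `C > 0` (depending only
on `n, k, m`) such that every decreasing `λ ∈ Γ_k` with `σ_k(λ) ≥ m` satisfies
`σ_{k-1}(λ) ≥ C·λ_1^{1/(k-1)}`. -/
theorem stmt3 (n k : ℕ) (hk : 2 ≤ k) (hkn : k ≤ n) (m : ℝ) (hm : 0 < m) :
    ∃ C : ℝ, 0 < C ∧ ∀ lam : Fin n → ℝ,
      lam ∈ GardingCone n k →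
      (∀ i j : Fin n, i ≤ j → lam j ≤ lam i) →
      m ≤ esymm n k lam →
      C * (lam ⟨0, by omega⟩) ^ ((1 : ℝ) / ((k : ℝ) - 1)) ≤ esymm n (k - 1) lam := by
  classical
  have hn : 0 < n := by omega
  set c0 : ℝ := (m / 2^n)^(k-2) with hc0
  have hc0pos : 0 < c0 := by positivity
  refine ⟨c0 ^ ((1:ℝ)/((k:ℝ)-1)), by positivity, ?_⟩
  intro lam hlam hmono hm_le
  set S : Multiset ℝ := Multiset.map lam Finset.univ.val with hS
  have hbridge : ∀ j, esymm n j lam = S.esymm j := by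
    intro j
    unfold _root_.esymm
    rw [hS]
    exact (Finset.esymm_map_val lam Finset.univ j).symm
  have hG : NS.Gam k S := by
    intro j hj1 hj2
    rw [← hbridge]
    exact hlam j hj1 hj2
  set A : ℕ → Finset (Fin n) := fun d => Finset.univ.filter (fun i : Fin n => d ≤ (i:ℕ))
    with hA
  set T : ℕ → Multiset ℝ := fun d => (A d).val.map lam with hT
  have hT0 : T 0 = S := by
    rw [hT, hS, hA]
    simp
  set lam' : ℕ → ℝ := fun j => if h : j < n then lam ⟨j, h⟩ else 0 with hlam'
  have hTd : ∀ d, d < n → T d = lam' d ::ₘ T (d+1) := by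
    intro d hd
    have hins : A d = insert ⟨d, hd⟩ (A (d+1)) := by
      ext i
      simp only [hA, Finset.mem_filter, Finset.mem_univ, true_and, Finset.mem_insert,
        Fin.ext_iff]
      omega
    have hnotmem : (⟨d, hd⟩ : Fin n) ∉ A (d+1) := by simp [hA]
    rw [hT]
    simp only []
    rw [hins, Finset.insert_val, Multiset.ndinsert_of_notMem hnotmem, Multiset.map_cons]
    congr 1
    rw [hlam']
    simp [hd]
  have hTmax : ∀ d, ∀ x ∈ T d, x ≤ lam' d := by
    intro d x hx
    rw [hT] at hx
    obtain ⟨i, hi, rfl⟩ := Multiset.mem_map.mp hx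
    have hdi : d ≤ (i : ℕ) := by
      have := Finset.mem_filter.mp (by exact_mod_cast hi : i ∈ A d)
      exact this.2
    have hd : d < n := lt_of_le_of_lt hdi i.isLt
    rw [hlam']
    simp only [dif_pos hd]
    exact hmono ⟨d, hd⟩ i (by rw [Fin.le_def]; exact hdi)
  have hmemT : ∀ d, d < n → lam' d ∈ T d := by
    intro d hd
    rw [hTd d hd]
    exact Multiset.mem_cons_self _ _
  have claimGam : ∀ d, d ≤ k-1 → NS.Gam (k-d) (T d) := by
    intro d
    induction d with
    | zero => intro _; rw [hT0]; simpa using hG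
    | succ d ih =>
      intro hd
      have hdn : d < n := by omega
      have hG' := ih (by omega)
      have h2 := NS.Gam_erase (Multiset.card (T d)) (T d) rfl (k-d) hG' (lam' d)
        (hmemT d hdn)
      have herase : (T d).erase (lam' d) = T (d+1) := by
        rw [hTd d hdn, Multiset.erase_cons_head]
      rw [herase] at h2
      rw [show k - (d+1) = k - d - 1 from by omega]
      exact h2
  have lampos : ∀ d, d ≤ k-1 → 0 < lam' d := by
    intro d hd
    have hdn : d < n := by omega
    have hsum : 0 < (T d).sum := by
      have := claimGam d hd 1 le_rfl (by omega)
      rwa [NS.esymm_one'] at this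
    by_contra hc
    push_neg at hc
    have : (T d).sum ≤ 0 := NS.sum_nonpos (fun x hx => le_trans (hTmax d x hx) hc)
    linarith
  have claimProd : ∀ d, d ≤ k-1 →
      (∏ j ∈ Finset.range d, lam' j) * (T d).esymm (k-1-d) ≤ S.esymm (k-1) := by
    intro d
    induction d with
    | zero => intro _; rw [hT0]; simp
    | succ d ih =>
      intro hd
      have hdn : d < n := by omega
      have hGd1 : NS.Gam (k-(d+1)) (T (d+1)) := claimGam (d+1) hd
      have hsplit := NS.esymm_cons (lam' d) (T (d+1)) (k-1-(d+1))
      rw [show k-1-(d+1)+1 = k-1-d from by omega] at hsplit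
      rw [← hTd d hdn] at hsplit
      have hpos1 : 0 < (T (d+1)).esymm (k-1-d) := hGd1 (k-1-d) (by omega) (by omega)
      have hstep : lam' d * (T (d+1)).esymm (k-1-(d+1)) ≤ (T d).esymm (k-1-d) := by
        rw [hsplit]; linarith
      have hprodpos : 0 ≤ ∏ j ∈ Finset.range d, lam' j :=
        Finset.prod_nonneg (fun j hj =>
          (lampos j (by have := Finset.mem_range.mp hj; omega)).le)
      calc (∏ j ∈ Finset.range (d+1), lam' j) * (T (d+1)).esymm (k-1-(d+1))
          = (∏ j ∈ Finset.range d, lam' j) * (lam' d * (T (d+1)).esymm (k-1-(d+1))) := by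
            rw [Finset.prod_range_succ]; ring
        _ ≤ (∏ j ∈ Finset.range d, lam' j) * (T d).esymm (k-1-d) :=
            mul_le_mul_of_nonneg_left hstep hprodpos
        _ ≤ S.esymm (k-1) := ih (by omega)
  set P := ∏ j ∈ Finset.range (k-1), lam' j with hP
  have hPbound : P ≤ S.esymm (k-1) := by
    have := claimProd (k-1) le_rfl
    rwa [Nat.sub_self, NS.esymm_zero, mul_one] at this
  have hPpos : 0 < P :=
    Finset.prod_pos (fun j hj => lampos j (by have := Finset.mem_range.mp hj; omega))
  -- upper bound on esymm k
  set Pos := Finset.univ.filter (fun i : Fin n => 0 ≤ lam i) with hPos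
  have hsplitS : S = Multiset.map lam Pos.val
      + Multiset.map lam ((Finset.univ.filter (fun i : Fin n => ¬ 0 ≤ lam i)).val) := by
    rw [hS, hPos, Finset.filter_val, Finset.filter_val, ← Multiset.map_add,
      Multiset.filter_add_not]
  have hnegpart : ∀ x ∈ Multiset.map lam ((Finset.univ.filter
      (fun i : Fin n => ¬ 0 ≤ lam i)).val), x ≤ 0 := by
    intro x hx
    obtain ⟨i, hi, rfl⟩ := Multiset.mem_map.mp hx
    have := Finset.mem_filter.mp (by exact_mod_cast hi :
      i ∈ Finset.univ.filter (fun i : Fin n => ¬ 0 ≤ lam i))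
    linarith [this.2, le_of_not_ge this.2]
  have hGP := NS.Gam_sub_nonpos _ _ hnegpart (by rw [← hsplitS]; exact hG)
  have hSk_le : S.esymm k ≤ (Multiset.map lam Pos.val).esymm k := by
    have := hGP.2 k le_rfl
    rwa [← hsplitS] at this
  set Q := ∏ j : Fin k, lam (Fin.castLE hkn j) with hQ
  have hesymmPos : (Multiset.map lam Pos.val).esymm k
      = ∑ B ∈ Pos.powersetCard k, ∏ i ∈ B, lam i := Finset.esymm_map_val lam Pos k
  have hterm : ∀ B ∈ Pos.powersetCard k, ∏ i ∈ B, lam i ≤ Q := by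
    intro B hB
    obtain ⟨hBsub, hBcard⟩ := Finset.mem_powersetCard.mp hB
    exact NS.prod_subset_le hkn lam hmono B hBcard
      (fun i hi => (Finset.mem_filter.mp (hBsub hi)).2)
  have hQpos : 0 < Q := by
    rw [hQ]
    apply Finset.prod_pos
    intro j _
    have : lam (Fin.castLE hkn j) = lam' (j : ℕ) := by
      rw [hlam']
      simp only [dif_pos (lt_of_lt_of_le j.isLt hkn)]
      rfl
    rw [this]
    exact lampos (j : ℕ) (by omega)
  have hsum_le : ∑ B ∈ Pos.powersetCard k, ∏ i ∈ B, lam i ≤ (2:ℝ)^n * Q := by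
    calc ∑ B ∈ Pos.powersetCard k, ∏ i ∈ B, lam i
        ≤ (Pos.powersetCard k).card • Q :=
          Finset.sum_le_card_nsmul _ _ Q hterm
      _ = ((Pos.powersetCard k).card : ℝ) * Q := nsmul_eq_mul _ _
      _ ≤ (2:ℝ)^n * Q := by
          apply mul_le_mul_of_nonneg_right _ hQpos.le
          rw [Finset.card_powersetCard]
          calc ((Pos.card.choose k : ℕ) : ℝ) ≤ ((2^n : ℕ) : ℝ) := by
                exact_mod_cast NS.choose_le_two_pow_n Pos.card k n (by
                  calc Pos.card ≤ (Finset.univ : Finset (Fin n)).card :=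
                        Finset.card_le_card (Finset.filter_subset _ _)
                    _ = n := by simp)
            _ = (2:ℝ)^n := by push_cast; ring
  have hCk : S.esymm k ≤ (2:ℝ)^n * Q := by
    rw [hesymmPos] at hSk_le
    linarith
  -- final arithmetic
  have hQP : Q = P * lam' (k-1) := by
    rw [hQ, hP]
    have h1 : ∀ j : Fin k, lam (Fin.castLE hkn j) = lam' (j : ℕ) := by
      intro j
      rw [hlam']
      simp only [dif_pos (lt_of_lt_of_le j.isLt hkn)]
      rfl
    rw [Finset.prod_congr rfl (fun j _ => h1 j), Fin.prod_univ_eq_prod_range,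
      show k = (k-1)+1 from by omega, Finset.prod_range_succ]
    simp [show (k-1)+1-1 = k-1 from by omega]
  have hlk : 0 < lam' (k-1) := lampos (k-1) le_rfl
  have hm2 : m ≤ (2:ℝ)^n * (P * lam' (k-1)) := by
    rw [← hQP]
    calc m ≤ esymm n k lam := hm_le
      _ = S.esymm k := hbridge k
      _ ≤ (2:ℝ)^n * Q := hCk
  have hPlk : m / (2:ℝ)^n ≤ P * lam' (k-1) := by
    rw [div_le_iff₀ (by positivity : (0:ℝ) < (2:ℝ)^n)]
    linarith [hm2]
  have hlam'anti : ∀ a b : ℕ, a ≤ b → b < n → lam' b ≤ lam' a := by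
    intro a b hab hbn
    rw [hlam']
    simp only [dif_pos hbn, dif_pos (lt_of_le_of_lt hab hbn)]
    exact hmono ⟨a, _⟩ ⟨b, _⟩ (by rw [Fin.le_def]; exact hab)
  have hP_ge : lam' 0 * (lam' (k-1))^(k-2) ≤ P := by
    have hsplit : P = (∏ j ∈ Finset.range (k-2), lam' (j+1)) * lam' 0 := by
      rw [hP, show k-1 = (k-2)+1 from by omega, Finset.prod_range_succ']
    have hprodge : (lam' (k-1))^(k-2) ≤ ∏ j ∈ Finset.range (k-2), lam' (j+1) := by
      calc (lam' (k-1))^(k-2) = ∏ _j ∈ Finset.range (k-2), lam' (k-1) := by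
            rw [Finset.prod_const, Finset.card_range]
        _ ≤ ∏ j ∈ Finset.range (k-2), lam' (j+1) := by
            apply Finset.prod_le_prod
            · intro j _; exact hlk.le
            · intro j hj
              have hjr := Finset.mem_range.mp hj
              exact hlam'anti (j+1) (k-1) (by omega) (by omega)
    calc lam' 0 * (lam' (k-1))^(k-2) ≤ lam' 0 * ∏ j ∈ Finset.range (k-2), lam' (j+1) :=
          mul_le_mul_of_nonneg_left hprodge (lampos 0 (by omega)).le
      _ = P := by rw [hsplit]; ring
  have hfinal_pow : c0 * lam' 0 ≤ P^(k-1) := by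
    have h1 : m / (2:ℝ)^n ≤ lam' (k-1) * P := by linarith [hPlk]
    have h2 : (m/(2:ℝ)^n)^(k-2) ≤ (lam' (k-1) * P)^(k-2) :=
      pow_le_pow_left₀ (by positivity) h1 _
    calc c0 * lam' 0 = lam' 0 * (m/(2:ℝ)^n)^(k-2) := by rw [hc0]; ring
      _ ≤ lam' 0 * (lam' (k-1) * P)^(k-2) :=
          mul_le_mul_of_nonneg_left h2 (lampos 0 (by omega)).le
      _ = (lam' 0 * (lam' (k-1))^(k-2)) * P^(k-2) := by rw [mul_pow]; ring
      _ ≤ P * P^(k-2) := mul_le_mul_of_nonneg_right hP_ge (by positivity)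
      _ = P^(k-1) := by rw [show k-1 = (k-2)+1 from by omega, pow_succ]; ring
  -- rpow endgame
  have hlam0 : lam ⟨0, by omega⟩ = lam' 0 := by
    rw [hlam']
    simp only [dif_pos hn]
  rw [hbridge (k-1), hlam0]
  have hlam0pos : 0 < lam' 0 := lampos 0 (by omega)
  set e : ℝ := (1:ℝ)/((k:ℝ)-1) with he
  have hepos : 0 < e := by
    rw [he]
    apply div_pos one_pos
    have : (2:ℝ) ≤ (k:ℝ) := by exact_mod_cast hk
    linarith
  have hrpow : (c0 * lam' 0) ^ e ≤ P := by
    have h1 : (c0 * lam' 0) ^ e ≤ (P^(k-1)) ^ e :=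
      Real.rpow_le_rpow (by positivity) hfinal_pow hepos.le
    have h2 : (P^(k-1) : ℝ) ^ e = P := by
      rw [← Real.rpow_natCast P (k-1), ← Real.rpow_mul hPpos.le]
      rw [show ((k-1 : ℕ) : ℝ) * e = 1 from by
        have hne : (k:ℝ) - 1 ≠ 0 := by
          have h2k : (2:ℝ) ≤ (k:ℝ) := by exact_mod_cast hk
          linarith
        have hcast : ((k-1 : ℕ) : ℝ) = (k:ℝ) - 1 := by
          push_cast [Nat.cast_sub (by omega : 1 ≤ k)]
          ring
        rw [hcast, he, mul_one_div, div_self hne]]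
      exact Real.rpow_one P
    rw [h2] at h1
    exact h1
  calc c0 ^ e * (lam' 0) ^ e = (c0 * lam' 0) ^ e :=
        (Real.mul_rpow hc0pos.le hlam0pos.le).symm
    _ ≤ P := hrpow
    _ ≤ S.esymm (k-1) := hPbound
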